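/- Let (X, d_X, ν_X) be a compact metric space with a Borel probability measure. The function ε ↦ ρ_ε^X := inf_{x ∈ X} ν_X(C_ε(x)) from [0, ∞) to ℝ is monotonically increasing and right-continuous, where C_ε(x) denotes the closed ε-ball around x. -/

import Mathlib

open MeasureTheory Metric Set Filter ENNReal

/-- For a compact metric probability space, `ε ↦ ρ_ε^X = inf_x ν(C_ε(x))` is
monotonically increasing on `[0, ∞)` and right-continuous there. -/
theorem rho_monotone_and_right_continuous
    (X : Type) [MetricSpace X] [CompactSpace X]
    [MeasurableSpace X] [BorelSpace X]
    (ν : Measure X) [IsProbabilityMeasure ν] :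
    MonotoneOn (fun ε : ℝ => (⨅ x : X, ν (Metric.closedBall x ε)).toReal) (Set.Ici 0) ∧
    ∀ ε : ℝ, 0 ≤ ε →
      Filter.Tendsto (fun t : ℝ => (⨅ x : X, ν (Metric.closedBall x t)).toReal)
        (nhdsWithin ε (Set.Ioi ε))
        (nhds ((⨅ x : X, ν (Metric.closedBall x ε)).toReal)) := by
  have hne : Nonempty X := by
    by_contra h
    rw [not_nonempty_iff] at h
    have h1 : ν univ = 1 := measure_univ
    rw [Set.univ_eq_empty_iff.2 h, measure_empty] at h1
    exact zero_ne_one h1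
  set f : ℝ → ℝ≥0∞ := fun ε => ⨅ x : X, ν (Metric.closedBall x ε) with hf
  have hmono : Monotone f := fun a b hab =>
    iInf_mono fun x => measure_mono (closedBall_subset_closedBall hab)
  have hfin : ∀ t, f t ≠ ∞ := fun t =>
    ne_top_of_le_ne_top ENNReal.one_ne_top
      (le_trans (iInf_le _ (Classical.arbitrary X)) prob_le_one)
  -- key: for each x and ε, ⨅ t ∈ Ioi ε, ν (closedBall x t) = ν (closedBall x ε)
  have key : ∀ (x : X) (ε : ℝ), (⨅ t ∈ Ioi ε, ν (Metric.closedBall x t)) =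
      ν (Metric.closedBall x ε) := by
    intro x ε
    refine le_antisymm ?_ (le_iInf₂ fun t ht =>
      measure_mono (closedBall_subset_closedBall ht.le))
    have hInt : (⋂ n : ℕ, Metric.closedBall x (ε + 1 / (n + 1))) = Metric.closedBall x ε := by
      ext y
      simp only [mem_iInter, Metric.mem_closedBall]
      constructor
      · intro h
        by_contra hlt
        push_neg at hlt
        obtain ⟨n, hn⟩ := exists_nat_one_div_lt (sub_pos.2 hlt)
        have := h n
        linarith
      · intro h n
        have : (0:ℝ) < 1 / (n + 1) := by positivity
        linarith
    have hle : ∀ m n : ℕ, m ≤ n → ε + 1 / ((n : ℝ) + 1) ≤ ε + 1 / ((m : ℝ) + 1) := by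
      intro m n h
      have h1 : (0:ℝ) < (m:ℝ) + 1 := by positivity
      have h2 : (m:ℝ) + 1 ≤ (n:ℝ) + 1 := by exact_mod_cast Nat.succ_le_succ h
      linarith [one_div_le_one_div_of_le h1 h2]
    have hdir : Directed (· ⊇ ·) (fun n : ℕ => Metric.closedBall x (ε + 1 / (n + 1))) :=
      fun m n => ⟨max m n, closedBall_subset_closedBall (hle m _ (le_max_left _ _)),
        closedBall_subset_closedBall (hle n _ (le_max_right _ _))⟩
    have hmeas : ν (Metric.closedBall x ε) = ⨅ n : ℕ, ν (Metric.closedBall x (ε + 1 / (n + 1))) := by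
      rw [← hInt]
      exact Directed.measure_iInter
        (fun n => (measurableSet_closedBall).nullMeasurableSet) hdir
        ⟨0, measure_ne_top ν _⟩
    rw [hmeas]
    refine le_iInf fun n => iInf₂_le _ ?_
    simp only [mem_Ioi]
    have : (0:ℝ) < 1 / ((n:ℝ) + 1) := by positivity
    linarith
  have hsInf : ∀ ε : ℝ, sInf (f '' Ioi ε) = f ε := by
    intro ε
    rw [sInf_image]
    calc (⨅ t ∈ Ioi ε, f t) = ⨅ t ∈ Ioi ε, ⨅ x : X, ν (Metric.closedBall x t) := rfl
      _ = ⨅ x : X, ⨅ t ∈ Ioi ε, ν (Metric.closedBall x t) := by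
          rw [iInf_comm]; exact iInf_congr fun t => iInf_comm
      _ = ⨅ x : X, ν (Metric.closedBall x ε) := iInf_congr fun x => key x ε
  constructor
  · exact fun a _ b _ hab =>
      ENNReal.toReal_mono (hfin b) (hmono hab)
  · intro ε _
    have h1 : Tendsto f (nhdsWithin ε (Ioi ε)) (nhds (f ε)) := by
      have := hmono.tendsto_nhdsGT ε
      rwa [hsInf ε] at this
    exact (ENNReal.tendsto_toReal (hfin ε)).comp h1
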